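/- A collection of convex subsets {σ_i} of R^n is called convexly disjoint if every convex subset of the union ∪_i σ_i is contained in one of the σ_i. Then: (1) if each of two collections {σ_i} in R^n and {τ_j} in R^m is convexly disjoint, the product collection {σ_i × τ_j} in R^{n+m} is convexly disjoint; and (2) if {σ_i} in R^n is convexly disjoint and L ⊂ R^n is a linear subspace, then {σ_i ∩ L} is convexly disjoint. -/
import Mathlib


/-- A collection of subsets of a real vector space is *convexly disjoint* if every
convex subset of the union is contained in one of the members. -/
def ConvexlyDisjoint {V : Type*} [AddCommGroup V] [Module ℝ V]
    {ι : Type*} (σ : ι → Set V) : Prop :=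
  ∀ C : Set V, Convex ℝ C → C ⊆ ⋃ i, σ i → ∃ i, C ⊆ σ i

/-- (1) The product of two convexly disjoint collections of convex sets (in `ℝⁿ` and `ℝᵐ`)
is convexly disjoint in `ℝⁿ × ℝᵐ = ℝ^{n+m}`; (2) the intersection of a convexly disjoint
collection of convex sets in `ℝⁿ` with a linear subspace is convexly disjoint. -/
theorem convexlyDisjoint_prod_and_inter :
    (∀ (n m : ℕ) (ι κ : Type) (σ : ι → Set (Fin n → ℝ)) (τ : κ → Set (Fin m → ℝ)),
      (∀ i, Convex ℝ (σ i)) → (∀ j, Convex ℝ (τ j)) →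
      ConvexlyDisjoint σ → ConvexlyDisjoint τ →
      ConvexlyDisjoint (fun p : ι × κ => σ p.1 ×ˢ τ p.2)) ∧
    (∀ (n : ℕ) (ι : Type) (σ : ι → Set (Fin n → ℝ)) (L : Submodule ℝ (Fin n → ℝ)),
      (∀ i, Convex ℝ (σ i)) → ConvexlyDisjoint σ →
      ConvexlyDisjoint (fun i => σ i ∩ (L : Set (Fin n → ℝ)))) := by
  constructor
  · intro n m ι κ σ τ hσc hτc hσ hτ C hC hCU
    -- project to each factor
    have h1 : (Prod.fst '' C : Set (Fin n → ℝ)) ⊆ ⋃ i, σ i := by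
      rintro x ⟨⟨a, b⟩, hab, rfl⟩
      obtain ⟨s, ⟨⟨i, j⟩, rfl⟩, hs⟩ := hCU hab
      exact Set.mem_iUnion.2 ⟨i, hs.1⟩
    have h2 : (Prod.snd '' C : Set (Fin m → ℝ)) ⊆ ⋃ j, τ j := by
      rintro y ⟨⟨a, b⟩, hab, rfl⟩
      obtain ⟨s, ⟨⟨i, j⟩, rfl⟩, hs⟩ := hCU hab
      exact Set.mem_iUnion.2 ⟨j, hs.2⟩
    obtain ⟨i, hi⟩ := hσ _ (hC.linear_image (LinearMap.fst ℝ _ _)) h1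
    obtain ⟨j, hj⟩ := hτ _ (hC.linear_image (LinearMap.snd ℝ _ _)) h2
    exact ⟨⟨i, j⟩, fun p hp => ⟨hi ⟨p, hp, rfl⟩, hj ⟨p, hp, rfl⟩⟩⟩
  · intro n ι σ L hσc hσ C hC hCU
    have hL : C ⊆ (L : Set (Fin n → ℝ)) := fun x hx => by
      obtain ⟨s, ⟨i, rfl⟩, hs⟩ := hCU hx
      exact hs.2
    have hU : C ⊆ ⋃ i, σ i := fun x hx => by
      obtain ⟨s, ⟨i, rfl⟩, hs⟩ := hCU hx
      exact Set.mem_iUnion.2 ⟨i, hs.1⟩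
    obtain ⟨i, hi⟩ := hσ C hC hU
    exact ⟨i, fun x hx => ⟨hi hx, hL hx⟩⟩
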